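/- (Singleton bound for symbol-pair codes) Let q ≥ 2 and 2 ≤ d_p ≤ n. If C ⊆ F_q^n is a code with minimum symbol-pair distance d_p, then |C| ≤ q^{n - d_p + 2}. -/

import Mathlib

/-- Symbol-pair distance between two vectors (indices mod n). -/
def pairDist {F : Type*} [DecidableEq F] {n : ℕ} [NeZero n] (x y : Fin n → F) : ℕ :=
  (Finset.univ.filter fun i : Fin n => ¬(x i = y i ∧ x (i + 1) = y (i + 1))).card

/-- Singleton bound for symbol-pair codes. -/
theorem stmt3 {F : Type*} [Field F] [Fintype F] [DecidableEq F] {n : ℕ} [NeZero n]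
    (hq : 2 ≤ Fintype.card F) (C : Finset (Fin n → F)) (d : ℕ)
    (hd2 : 2 ≤ d) (hdn : d ≤ n)
    (hmin : ∀ x ∈ C, ∀ y ∈ C, x ≠ y → d ≤ pairDist x y)
    (hex : ∃ x ∈ C, ∃ y ∈ C, x ≠ y ∧ pairDist x y = d) :
    C.card ≤ Fintype.card F ^ (n - d + 2) := by
  classical
  have hn : 0 < n := Nat.pos_of_ne_zero (NeZero.ne n)
  set m := n - d + 2 with hm
  have hle : m ≤ n := by omega
  have key : ∀ x ∈ C, ∀ y ∈ C,
      (∀ i : Fin n, (i : ℕ) < m → x i = y i) → x = y := by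
    intro x hx y hy hagree
    by_contra hne
    have hd := hmin x hx y hy hne
    have hsub : (Finset.univ.filter fun i : Fin n =>
        ¬(x i = y i ∧ x (i + 1) = y (i + 1))) ⊆
        Finset.univ.filter fun i : Fin n => n - d + 1 ≤ (i : ℕ) := by
      intro i hi
      simp only [Finset.mem_filter, Finset.mem_univ, true_and] at hi ⊢
      by_contra hlt
      push_neg at hlt
      apply hi
      have hiv : (i : ℕ) < n - 1 := by omega
      have hsucc : ((i + 1 : Fin n) : ℕ) = (i : ℕ) + 1 := by
        have h1 : (1 : ℕ) % n = 1 := Nat.mod_eq_of_lt (by omega)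
        rw [Fin.val_add, Fin.val_one', h1, Nat.mod_eq_of_lt (by omega)]
      refine ⟨hagree i (by omega), hagree (i + 1) (by omega)⟩
    have hcard : (Finset.univ.filter fun i : Fin n => n - d + 1 ≤ (i : ℕ)).card ≤ d - 1 := by
      have := Finset.card_le_card_of_injOn
        (s := Finset.univ.filter fun i : Fin n => n - d + 1 ≤ (i : ℕ))
        (fun i : Fin n => (i : ℕ) - (n - d + 1))
        (t := Finset.range (d - 1)) ?_ ?_
      · simpa using this
      · intro i hi
        simp only [Finset.mem_coe, Finset.mem_filter, Finset.mem_univ, true_and] at hi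
        have : (i : ℕ) < n := i.isLt
        simp only [Finset.mem_coe, Finset.mem_range]
        omega
      · intro i hi j hj hij
        simp only [Finset.mem_coe, Finset.mem_filter, Finset.mem_univ, true_and] at hi hj
        have hij' : (i : ℕ) - (n - d + 1) = (j : ℕ) - (n - d + 1) := hij
        exact Fin.ext (by omega)
    have hpd : pairDist x y ≤ d - 1 := le_trans (Finset.card_le_card hsub) hcard
    omega
  have hinjOn : Set.InjOn
      (fun x : Fin n → F => fun i : Fin m => x ⟨i, lt_of_lt_of_le i.isLt hle⟩) C := by
    intro x hx y hy hxy
    refine key x hx y hy ?_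
    intro i hi
    exact congrFun hxy ⟨i, hi⟩
  have hinj := Finset.card_le_card_of_injOn
    (fun x : Fin n → F => fun i : Fin m => x ⟨i, lt_of_lt_of_le i.isLt hle⟩)
    (t := (Finset.univ : Finset (Fin m → F))) (fun x _ => Finset.mem_univ _) hinjOn
  calc C.card ≤ (Finset.univ : Finset (Fin m → F)).card := hinj
    _ = Fintype.card F ^ m := by
      simp [Finset.card_univ, Fintype.card_fun]
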